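/- Let Φ : G × Q → Q be a smooth left action of a Lie group on a smooth manifold, g_d : ℝ → G a smooth curve with Φ(g_d(t), 0_Q) = q_d(t), q : ℝ → Q a smooth curve, and e(t) = Φ(g_d(t)⁻¹, q(t)). Then for each t, the derivative ė(t) equals the zero tangent vector at 0_Q if and only if q̇(t) = q̇_d(t) in TQ. -/

import Mathlib

open Manifold Bundle

private lemma tb_mk_eq_iff
    {E : Type*} [NormedAddCommGroup E] [NormedSpace ℝ E]
    {H : Type*} [TopologicalSpace H] {I : ModelWithCorners ℝ E H}
    {Q : Type*} [TopologicalSpace Q] [ChartedSpace H Q]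
    {x y : Q} {v : TangentSpace I x} {w : TangentSpace I y} :
    (TotalSpace.mk x v : TangentBundle I Q) = TotalSpace.mk y w ↔ x = y ∧ (v : E) = (w : E) := by
  constructor
  · intro h
    have h1 : x = y := congrArg TotalSpace.proj h
    subst h1
    exact ⟨rfl, TotalSpace.mk_inj.1 h⟩
  · rintro ⟨rfl, h⟩
    exact congrArg _ h

private lemma key_lemma
    {E : Type*} [NormedAddCommGroup E] [NormedSpace ℝ E]
    {H : Type*} [TopologicalSpace H] {I : ModelWithCorners ℝ E H}
    {Q : Type*} [TopologicalSpace Q] [ChartedSpace H Q] [IsManifold I (⊤ : ℕ∞) Q]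
    (F : ℝ × Q → Q) (hF : ContMDiff (𝓘(ℝ, ℝ).prod I) I (⊤ : ℕ∞) F)
    (a b : ℝ → Q) (ha : ContMDiff 𝓘(ℝ, ℝ) I (⊤ : ℕ∞) a) (hb : ContMDiff 𝓘(ℝ, ℝ) I (⊤ : ℕ∞) b)
    (t : ℝ) (hab : a t = b t)
    (hab' : (mfderiv 𝓘(ℝ, ℝ) I a t (1:ℝ) : E) = (mfderiv 𝓘(ℝ, ℝ) I b t (1:ℝ) : E)) :
    (mfderiv 𝓘(ℝ, ℝ) I (fun s => F (s, a s)) t (1:ℝ) : E)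
      = (mfderiv 𝓘(ℝ, ℝ) I (fun s => F (s, b s)) t (1:ℝ) : E) := by
  have hFa : MDifferentiableAt (𝓘(ℝ, ℝ).prod I) I F (t, a t) :=
    (hF (t, a t)).mdifferentiableAt (by simp)
  have haid : MDifferentiableAt 𝓘(ℝ, ℝ) (𝓘(ℝ, ℝ).prod I) (fun s : ℝ => (s, a s)) t :=
    mdifferentiableAt_id.prodMk ((ha t).mdifferentiableAt (by simp))
  have hbid : MDifferentiableAt 𝓘(ℝ, ℝ) (𝓘(ℝ, ℝ).prod I) (fun s : ℝ => (s, b s)) t :=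
    mdifferentiableAt_id.prodMk ((hb t).mdifferentiableAt (by simp))
  have ca : mfderiv 𝓘(ℝ, ℝ) I (fun s => F (s, a s)) t
      = (mfderiv (𝓘(ℝ, ℝ).prod I) I F (t, a t)).comp
          (mfderiv 𝓘(ℝ, ℝ) (𝓘(ℝ, ℝ).prod I) (fun s : ℝ => (s, a s)) t) :=
    mfderiv_comp t hFa haid
  have cb : mfderiv 𝓘(ℝ, ℝ) I (fun s => F (s, b s)) t
      = (mfderiv (𝓘(ℝ, ℝ).prod I) I F (t, b t)).comp
          (mfderiv 𝓘(ℝ, ℝ) (𝓘(ℝ, ℝ).prod I) (fun s : ℝ => (s, b s)) t) := by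
    have hFb : MDifferentiableAt (𝓘(ℝ, ℝ).prod I) I F (t, b t) := by
      rw [← hab]; exact hFa
    exact mfderiv_comp t hFb hbid
  have pa : mfderiv 𝓘(ℝ, ℝ) (𝓘(ℝ, ℝ).prod I) (fun s : ℝ => (s, a s)) t
      = (mfderiv 𝓘(ℝ, ℝ) 𝓘(ℝ, ℝ) id t).prod (mfderiv 𝓘(ℝ, ℝ) I a t) :=
    mdifferentiableAt_id.mfderiv_prod ((ha t).mdifferentiableAt (by simp))
  have pb : mfderiv 𝓘(ℝ, ℝ) (𝓘(ℝ, ℝ).prod I) (fun s : ℝ => (s, b s)) t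
      = (mfderiv 𝓘(ℝ, ℝ) 𝓘(ℝ, ℝ) id t).prod (mfderiv 𝓘(ℝ, ℝ) I b t) :=
    mdifferentiableAt_id.mfderiv_prod ((hb t).mdifferentiableAt (by simp))
  rw [ca, cb, pa, pb]
  show mfderiv (𝓘(ℝ, ℝ).prod I) I F (t, a t)
      (mfderiv 𝓘(ℝ, ℝ) 𝓘(ℝ, ℝ) id t (1:ℝ), mfderiv 𝓘(ℝ, ℝ) I a t (1:ℝ))
    = mfderiv (𝓘(ℝ, ℝ).prod I) I F (t, b t)
      (mfderiv 𝓘(ℝ, ℝ) 𝓘(ℝ, ℝ) id t (1:ℝ), mfderiv 𝓘(ℝ, ℝ) I b t (1:ℝ))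
  rw [hab', hab]

/-- For a smooth left action `Φ` of a Lie group `G` on a manifold `Q`, a reference
trajectory `q_d` with `0_Q`-lift `g_d`, and an actual trajectory `q`, the velocity of the
error curve `e(t) = Φ(g_d(t)⁻¹, q(t))` equals the zero tangent vector at `0_Q` if and only
if `q̇(t) = q̇_d(t)` in `TQ` (including equality of basepoints). -/
theorem error_velocity_vanishes_iff
    {E : Type*} [NormedAddCommGroup E] [NormedSpace ℝ E]
    {H : Type*} [TopologicalSpace H] {I : ModelWithCorners ℝ E H}
    {Q : Type*} [TopologicalSpace Q] [ChartedSpace H Q] [IsManifold I (⊤ : ℕ∞) Q]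
    {E' : Type*} [NormedAddCommGroup E'] [NormedSpace ℝ E']
    {H' : Type*} [TopologicalSpace H'] {J : ModelWithCorners ℝ E' H'}
    {G : Type*} [TopologicalSpace G] [ChartedSpace H' G] [Group G] [LieGroup J (⊤ : ℕ∞) G]
    (Φ : G → Q → Q)
    (hΦ : ContMDiff (J.prod I) I (⊤ : ℕ∞) (fun p : G × Q => Φ p.1 p.2))
    (hact_one : ∀ x : Q, Φ 1 x = x)
    (hact_mul : ∀ (g h : G) (x : Q), Φ g (Φ h x) = Φ (g * h) x)
    (origin : Q) (q q_d : ℝ → Q) (g_d : ℝ → G)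
    (hq : ContMDiff 𝓘(ℝ, ℝ) I (⊤ : ℕ∞) q) (hgd : ContMDiff 𝓘(ℝ, ℝ) J (⊤ : ℕ∞) g_d)
    (hlift : ∀ t, Φ (g_d t) origin = q_d t)
    (e : ℝ → Q) (he : ∀ t, e t = Φ (g_d t)⁻¹ (q t)) (t : ℝ) :
    (TotalSpace.mk (e t) (mfderiv 𝓘(ℝ, ℝ) I e t ((1:ℝ) : TangentSpace 𝓘(ℝ, ℝ) t))
        : TangentBundle I Q)
      = TotalSpace.mk origin (0 : TangentSpace I origin) ↔
    (TotalSpace.mk (q t) (mfderiv 𝓘(ℝ, ℝ) I q t ((1:ℝ) : TangentSpace 𝓘(ℝ, ℝ) t))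
        : TangentBundle I Q)
      = TotalSpace.mk (q_d t) (mfderiv 𝓘(ℝ, ℝ) I q_d t ((1:ℝ) : TangentSpace 𝓘(ℝ, ℝ) t)) := by
  have hne : ∀ (g : G) (x : Q), Φ g⁻¹ (Φ g x) = x := fun g x => by
    rw [hact_mul, inv_mul_cancel, hact_one]
  have hen : ∀ (g : G) (x : Q), Φ g (Φ g⁻¹ x) = x := fun g x => by
    rw [hact_mul, mul_inv_cancel, hact_one]
  have hF : ContMDiff (𝓘(ℝ, ℝ).prod I) I (⊤ : ℕ∞) (fun p : ℝ × Q => Φ (g_d p.1) p.2) :=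
    hΦ.comp ((hgd.comp contMDiff_fst).prodMk contMDiff_snd)
  have hF' : ContMDiff (𝓘(ℝ, ℝ).prod I) I (⊤ : ℕ∞) (fun p : ℝ × Q => Φ (g_d p.1)⁻¹ p.2) :=
    hΦ.comp (((hgd.comp contMDiff_fst).inv).prodMk contMDiff_snd)
  have he_eq : e = fun s => Φ (g_d s)⁻¹ (q s) := funext he
  have he_smooth : ContMDiff 𝓘(ℝ, ℝ) I (⊤ : ℕ∞) e := by
    rw [he_eq]
    exact hF'.comp (contMDiff_id.prodMk hq)
  have hqd_eq : q_d = fun s => Φ (g_d s) origin := funext fun s => (hlift s).symm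
  have hqd_smooth : ContMDiff 𝓘(ℝ, ℝ) I (⊤ : ℕ∞) q_d := by
    rw [hqd_eq]
    exact hF.comp (contMDiff_id.prodMk contMDiff_const)
  have hq_eq : q = fun s => Φ (g_d s) (e s) := funext fun s => by rw [he, hen]
  have horig : (fun _ : ℝ => origin) = fun s => Φ (g_d s)⁻¹ (q_d s) :=
    funext fun s => by rw [← hlift, hne]
  rw [tb_mk_eq_iff, tb_mk_eq_iff]
  constructor
  · rintro ⟨h0, h1⟩
    refine ⟨?_, ?_⟩
    · rw [hq_eq, hqd_eq]
      simp only [h0]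
    · calc (show E from mfderiv 𝓘(ℝ, ℝ) I q t (1:ℝ))
          = (show E from mfderiv 𝓘(ℝ, ℝ) I (fun s => Φ (g_d s) (e s)) t (1:ℝ)) := by rw [← hq_eq]; try rfl
        _ = (show E from mfderiv 𝓘(ℝ, ℝ) I (fun s => Φ (g_d s) origin) t (1:ℝ)) := by
            exact key_lemma _ hF e (fun _ => origin) he_smooth contMDiff_const t h0
              (by rw [h1, mfderiv_const]; rfl)
        _ = (show E from mfderiv 𝓘(ℝ, ℝ) I q_d t (1:ℝ)) := by rw [← hqd_eq]; try rfl
  · rintro ⟨h0, h1⟩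
    refine ⟨?_, ?_⟩
    · rw [he t, h0, ← hlift, hne]
    · calc (show E from mfderiv 𝓘(ℝ, ℝ) I e t (1:ℝ))
          = (show E from mfderiv 𝓘(ℝ, ℝ) I (fun s => Φ (g_d s)⁻¹ (q s)) t (1:ℝ)) := by rw [← he_eq]; try rfl
        _ = (show E from mfderiv 𝓘(ℝ, ℝ) I (fun s => Φ (g_d s)⁻¹ (q_d s)) t (1:ℝ)) :=
            key_lemma _ hF' q q_d hq hqd_smooth t h0 h1
        _ = (show E from mfderiv 𝓘(ℝ, ℝ) I (fun _ : ℝ => origin) t (1:ℝ)) := by rw [← horig]; try rfl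
        _ = 0 := by rw [mfderiv_const]; rfl
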